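/- Let T be a tree and g a non-elliptic self-embedding of T. For every neighbourhood U of g⁺, and every neighbourhood V of g⁻ if g is hyperbolic (with V = ∅ allowed if g is parabolic), there exists N ∈ ℕ such that g^n maps every vertex of T outside V into U, for all n ≥ N. -/

import Mathlib

open SimpleGraph

variable {V : Type*}

/-- `g` is a self-embedding of `G`: injective and adjacency-preserving. -/
def IsEmb (G : SimpleGraph V) (g : V → V) : Prop :=
  Function.Injective g ∧ ∀ u v : V, G.Adj u v → G.Adj (g u) (g v)

/-- A ray in `G`: a one-way infinite path. -/
structure GRay (G : SimpleGraph V) where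
  f : ℕ → V
  inj : Function.Injective f
  adj : ∀ n, G.Adj (f n) (f (n + 1))

/-- Two rays are equivalent (lie in the same end): for every vertex `v` they have
tails avoiding `v` lying in the same component of `G − v`. -/
def RayEquiv (G : SimpleGraph V) (R S : GRay G) : Prop :=
  ∀ v : V, ∃ m n : ℕ, (∀ i, m ≤ i → R.f i ≠ v) ∧ (∀ j, n ≤ j → S.f j ≠ v) ∧
    ∃ w : G.Walk (R.f m) (S.f n), v ∉ w.support

/-- `g` fixes the end represented by the ray `R`: the image ray is equivalent to `R`. -/
def FixesEnd (G : SimpleGraph V) (g : V → V) (R : GRay G) : Prop :=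
  ∃ S : GRay G, (∀ n, S.f n = g (R.f n)) ∧ RayEquiv G S R

def FixesVertex (g : V → V) : Prop := ∃ v, g v = v

/-- `g` fixes an edge setwise (possibly swapping its endpoints). -/
def FixesEdge (G : SimpleGraph V) (g : V → V) : Prop :=
  ∃ u v : V, G.Adj u v ∧ ((g u = u ∧ g v = v) ∨ (g u = v ∧ g v = u))

/-- `g` fixes setwise a non-empty finite subtree of `G`. -/
def FixesFiniteSubtree (G : SimpleGraph V) (g : V → V) : Prop :=
  ∃ S : Set V, S.Nonempty ∧ S.Finite ∧ (G.induce S).Connected ∧ g '' S = S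

/-- `R` is a ray with `g(R) ⊆ R`; for non-elliptic `g` its end is the direction `g⁺`. -/
def DirectionRay (G : SimpleGraph V) (g : V → V) (R : GRay G) : Prop :=
  ∀ n, ∃ m, g (R.f n) = R.f m

/-- `w` lies in the component of `G − x` containing the end of `R`. -/
def InComp (G : SimpleGraph V) (x : V) (R : GRay G) (w : V) : Prop :=
  ∃ m, (∀ i, m ≤ i → R.f i ≠ x) ∧ ∃ p : G.Walk w (R.f m), x ∉ p.support

/-- A sequence of vertices converges to the end represented by `R`. -/
def ConvergesTo (G : SimpleGraph V) (x : ℕ → V) (R : GRay G) : Prop :=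
  ∀ v : V, ∃ N : ℕ, ∀ n, N ≤ n → InComp G v R (x n)

/-- `M` is a submonoid of `Emb(G)`. -/
def IsEmbMonoid (G : SimpleGraph V) (M : Set (V → V)) : Prop :=
  (∀ g ∈ M, IsEmb G g) ∧ (id ∈ M) ∧ ∀ g ∈ M, ∀ h ∈ M, (g ∘ h) ∈ M

/-- The end of `R` is an accumulation point of the orbit of `v0` under `M`:
every basic neighbourhood of the end of `R` meets the orbit. -/
def InLimitSet (G : SimpleGraph V) (M : Set (V → V)) (v0 : V) (R : GRay G) : Prop :=
  ∀ x : V, ∃ g ∈ M, InComp G x R (g v0)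

/-- A self-embedding is elliptic if it fixes a vertex or an edge. -/
def Elliptic (G : SimpleGraph V) (g : V → V) : Prop := FixesVertex g ∨ FixesEdge G g


namespace Stmt18Aux

open SimpleGraph.Walk

variable {G : SimpleGraph V}


open SimpleGraph.Walk

variable {G : SimpleGraph V}

/-- the unique path between two vertices of a tree -/
noncomputable def pb (hT : G.IsTree) (a b : V) : G.Walk a b := by
  classical exact ((hT.isConnected.preconnected a b).some.bypass)

lemma pb_isPath (hT : G.IsTree) (a b : V) : (pb hT a b).IsPath := by
  classical exact Walk.bypass_isPath _

lemma path_eq (hT : G.IsTree) {a b : V} (p : G.Walk a b) (hp : p.IsPath) :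
    p = pb hT a b := by
  have := hT.IsAcyclic.path_unique ⟨p, hp⟩ ⟨pb hT a b, pb_isPath hT a b⟩
  exact congrArg Subtype.val this

/-- tree distance -/
noncomputable def dd (hT : G.IsTree) (a b : V) : ℕ := (pb hT a b).length

lemma dd_le (hT : G.IsTree) {a b : V} (p : G.Walk a b) : dd hT a b ≤ p.length := by
  classical
  have h1 : p.bypass = pb hT a b := path_eq hT _ (Walk.bypass_isPath p)
  have := Walk.length_bypass_le p
  rw [h1] at this; exact this

lemma pb_subset (hT : G.IsTree) {a b : V} (p : G.Walk a b) :
    (pb hT a b).support ⊆ p.support := by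
  classical
  have h1 : p.bypass = pb hT a b := path_eq hT _ (Walk.bypass_isPath p)
  rw [← h1]; exact Walk.support_bypass_subset p

lemma dd_self (hT : G.IsTree) (a : V) : dd hT a a = 0 := by
  have : (Walk.nil : G.Walk a a) = pb hT a a := path_eq hT _ (Walk.IsPath.nil)
  simp [dd, ← this]

lemma dd_eq_zero (hT : G.IsTree) {a b : V} (h : dd hT a b = 0) : a = b :=
  Walk.eq_of_length_eq_zero h

lemma dd_comm (hT : G.IsTree) (a b : V) : dd hT a b = dd hT b a := by
  have : (pb hT a b).reverse = pb hT b a := path_eq hT _ ((pb_isPath hT a b).reverse)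
  rw [dd, dd, ← this, Walk.length_reverse]

lemma dd_triangle (hT : G.IsTree) (a b c : V) : dd hT a c ≤ dd hT a b + dd hT b c := by
  have := dd_le hT ((pb hT a b).append (pb hT b c))
  rwa [Walk.length_append] at this

lemma dd_adj (hT : G.IsTree) {a b : V} (h : G.Adj a b) : dd hT a b = 1 := by
  have hp : (Walk.cons h Walk.nil : G.Walk a b).IsPath := by
    simp [Walk.isPath_def, h.ne]
  have := path_eq hT _ hp
  rw [dd, ← this]; rfl

/-- take the first `i` steps of a walk -/
def wtake : {u v : V} → (p : G.Walk u v) → (i : ℕ) → G.Walk u (p.getVert i)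
  | _, _, Walk.nil, _ => Walk.nil
  | _, _, Walk.cons _ _, 0 => Walk.nil
  | _, _, Walk.cons h p, (i+1) => Walk.cons h (wtake p i)

/-- drop the first `i` steps of a walk -/
def wdrop : {u v : V} → (p : G.Walk u v) → (i : ℕ) → G.Walk (p.getVert i) v
  | _, _, Walk.nil, _ => Walk.nil
  | _, _, p@(Walk.cons _ _), 0 => p
  | _, _, Walk.cons _ p, (i+1) => wdrop p i

lemma wtake_length {u v : V} (p : G.Walk u v) (i : ℕ) :
    (wtake p i).length = min i p.length := by
  induction p generalizing i with
  | nil => simp [wtake]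
  | cons h q ih =>
    cases i with
    | zero => simp [wtake]; rfl
    | succ i => simp [wtake, ih, Nat.succ_min_succ]

lemma wdrop_length {u v : V} (p : G.Walk u v) (i : ℕ) :
    (wdrop p i).length = p.length - i := by
  induction p generalizing i with
  | nil => simp [wdrop]
  | cons h q ih =>
    cases i with
    | zero => simp [wdrop]; rfl
    | succ i => simpa [wdrop, ih] using (ih i)

lemma wtake_getVert {u v : V} (p : G.Walk u v) (i j : ℕ) :
    (wtake p i).getVert j = p.getVert (min j i) := by
  induction p generalizing i j with
  | nil => simp [wtake, Walk.getVert]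
  | cons h q ih =>
    cases i with
    | zero => simp [wtake, Walk.getVert]
    | succ i =>
      cases j with
      | zero => simp [wtake, Walk.getVert]
      | succ j =>
        show (wtake q i).getVert j = (Walk.cons h q).getVert (min (j+1) (i+1))
        rw [Nat.succ_min_succ]
        simpa [Walk.getVert] using ih i j

lemma wdrop_getVert {u v : V} (p : G.Walk u v) (i j : ℕ) :
    (wdrop p i).getVert j = p.getVert (i + j) := by
  induction p generalizing i j with
  | nil => simp [wdrop, Walk.getVert]
  | cons h q ih =>
    cases i with
    | zero => simp [wdrop, Walk.getVert]
    | succ i =>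
      show (wdrop q i).getVert j = (Walk.cons h q).getVert (i+1+j)
      have : i + 1 + j = (i + j) + 1 := by omega
      rw [this]
      simpa [Walk.getVert] using ih i j

lemma wtake_support_prefix {u v : V} (p : G.Walk u v) (i : ℕ) :
    (wtake p i).support <+: p.support := by
  induction p generalizing i with
  | nil => simp [wtake]
  | cons h q ih =>
    cases i with
    | zero =>
      simp only [wtake, Walk.support_cons, Walk.support_nil]
      exact ⟨q.support, rfl⟩
    | succ i =>
      simp only [wtake, Walk.support_cons]
      obtain ⟨t, ht⟩ := ih i
      exact ⟨t, by rw [← ht]; rfl⟩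

lemma wdrop_support_suffix {u v : V} (p : G.Walk u v) (i : ℕ) :
    (wdrop p i).support <:+ p.support := by
  induction p generalizing i with
  | nil => exact List.suffix_refl _
  | cons h q ih =>
    cases i with
    | zero => exact List.suffix_refl _
    | succ i =>
      show (wdrop q i).support <:+ (Walk.cons h q).support
      rw [Walk.support_cons]
      exact (ih i).trans (List.suffix_cons _ _)

lemma wtake_isPath {u v : V} {p : G.Walk u v} (hp : p.IsPath) (i : ℕ) :
    (wtake p i).IsPath := by
  rw [Walk.isPath_def] at hp ⊢
  exact hp.sublist (wtake_support_prefix p i).sublist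

lemma wdrop_isPath {u v : V} {p : G.Walk u v} (hp : p.IsPath) (i : ℕ) :
    (wdrop p i).IsPath := by
  rw [Walk.isPath_def] at hp ⊢
  exact hp.sublist (wdrop_support_suffix p i).sublist

lemma wtake_support_subset {u v : V} (p : G.Walk u v) (i : ℕ) :
    (wtake p i).support ⊆ p.support := (wtake_support_prefix p i).sublist.subset

lemma wdrop_support_subset {u v : V} (p : G.Walk u v) (i : ℕ) :
    (wdrop p i).support ⊆ p.support := (wdrop_support_suffix p i).sublist.subset

/-- distance from the start along the unique path -/
lemma dd_getVert (hT : G.IsTree) {a b : V} {p : G.Walk a b} (hp : p.IsPath) {i : ℕ}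
    (hi : i ≤ p.length) : dd hT a (p.getVert i) = i := by
  have h1 : wtake p i = pb hT a (p.getVert i) := path_eq hT _ (wtake_isPath hp i)
  have h2 : dd hT a (p.getVert i) = (wtake p i).length := by rw [h1]; rfl
  rw [h2, wtake_length]; omega

lemma dd_getVert' (hT : G.IsTree) {a b : V} {p : G.Walk a b} (hp : p.IsPath) {i : ℕ}
    (hi : i ≤ p.length) : dd hT (p.getVert i) b = p.length - i := by
  have h1 : wdrop p i = pb hT (p.getVert i) b := path_eq hT _ (wdrop_isPath hp i)
  have h2 : dd hT (p.getVert i) b = (wdrop p i).length := by rw [h1]; rfl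
  rw [h2, wdrop_length]

lemma getVert_inj (hT : G.IsTree) {a b : V} {p : G.Walk a b} (hp : p.IsPath) {i j : ℕ}
    (hi : i ≤ p.length) (hj : j ≤ p.length) (h : p.getVert i = p.getVert j) : i = j := by
  have := dd_getVert hT hp hi
  rw [h, dd_getVert hT hp hj] at this; omega

lemma dd_split (hT : G.IsTree) {a b y : V} (hy : y ∈ (pb hT a b).support) :
    dd hT a y + dd hT y b = dd hT a b := by
  obtain ⟨i, hgv, hilen⟩ := Walk.mem_support_iff_exists_getVert.mp hy
  have h1 := dd_getVert hT (pb_isPath hT a b) hilen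
  have h2 := dd_getVert' hT (pb_isPath hT a b) hilen
  rw [hgv] at h1 h2
  rw [h1, h2]
  have h3 : dd hT a b = (pb hT a b).length := rfl
  omega


/-- segment of a ray, as a walk -/
def raySeg (P : GRay G) (i : ℕ) : (j : ℕ) → G.Walk (P.f i) (P.f (i + j))
  | 0 => Walk.nil.copy rfl (by rw [Nat.add_zero])
  | (j+1) => (Walk.cons (P.adj i) (raySeg P (i+1) j)).copy rfl
      (congrArg P.f (by omega))

@[simp] lemma raySeg_length (P : GRay G) (i j : ℕ) : (raySeg P i j).length = j := by
  induction j generalizing i with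
  | zero => simp [raySeg]
  | succ j ih => simp [raySeg, ih]

lemma raySeg_getVert (P : GRay G) (i j l : ℕ) :
    (raySeg P i j).getVert l = P.f (i + min l j) := by
  induction j generalizing i l with
  | zero =>
    have h0 : (raySeg P i 0).getVert l
        = (Walk.nil : G.Walk (P.f i) (P.f i)).getVert l := Walk.getVert_copy _ _ _ _
    rw [h0, Walk.getVert_of_length_le _ (by simp)]
    exact congrArg P.f (by omega)
  | succ j ih =>
    cases l with
    | zero => simp [raySeg, Walk.getVert_copy, Walk.getVert]
    | succ l =>
      rw [show (raySeg P i (j+1)).getVert (l+1)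
            = (Walk.cons (P.adj i) (raySeg P (i+1) j)).getVert (l+1) from
          Walk.getVert_copy _ _ _ _]
      have h2 : (Walk.cons (P.adj i) (raySeg P (i+1) j)).getVert (l+1)
          = (raySeg P (i+1) j).getVert l := rfl
      rw [h2, ih]
      exact congrArg P.f (by omega)

lemma raySeg_support (P : GRay G) (i j : ℕ) :
    (raySeg P i j).support = List.map (fun l => P.f (i + l)) (List.range (j+1)) := by
  induction j generalizing i with
  | zero => simp [raySeg, List.range_succ]
  | succ j ih =>
    rw [show (raySeg P i (j+1)).support
          = (Walk.cons (P.adj i) (raySeg P (i+1) j)).support from Walk.support_copy _ _ _]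
    rw [Walk.support_cons, ih]
    conv_rhs => rw [List.range_succ_eq_map, List.map_cons, List.map_map]
    simp only [Nat.add_zero]
    congr 1
    apply List.map_congr_left
    intro a _
    simp only [Function.comp_apply]
    exact congrArg P.f (by omega)

lemma mem_raySeg (P : GRay G) {i j : ℕ} {y : V} (hy : y ∈ (raySeg P i j).support) :
    ∃ l, l ≤ j ∧ y = P.f (i + l) := by
  rw [raySeg_support] at hy
  obtain ⟨l, hl, hly⟩ := List.mem_map.mp hy
  exact ⟨l, by have := List.mem_range.mp hl; omega, hly.symm⟩

lemma raySeg_mem (P : GRay G) {i j l : ℕ} (hl : l ≤ j) :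
    P.f (i + l) ∈ (raySeg P i j).support := by
  rw [raySeg_support]
  exact List.mem_map.mpr ⟨l, List.mem_range.mpr (by omega), rfl⟩

lemma raySeg_isPath (P : GRay G) (i j : ℕ) : (raySeg P i j).IsPath := by
  rw [Walk.isPath_def, raySeg_support]
  have hinj : Function.Injective (fun l : ℕ => P.f (i + l)) := by
    intro a b hab
    have := P.inj hab
    omega
  exact List.Nodup.map hinj List.nodup_range

lemma rayDist (hT : G.IsTree) (P : GRay G) (i j : ℕ) :
    dd hT (P.f i) (P.f (i+j)) = j := by
  have := path_eq hT _ (raySeg_isPath P i j)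
  rw [dd, ← this, raySeg_length]

lemma rayDist' (hT : G.IsTree) (P : GRay G) {i j : ℕ} (h : i ≤ j) :
    dd hT (P.f i) (P.f j) = j - i := by
  have h2 := rayDist hT P i (j - i)
  rw [show i + (j - i) = j by omega] at h2
  exact h2

lemma ray_dd (hT : G.IsTree) (P : GRay G) (i j : ℕ) :
    dd hT (P.f i) (P.f j) = (j - i) + (i - j) := by
  rcases le_total i j with h | h
  · rw [rayDist' hT P h]; omega
  · rw [dd_comm, rayDist' hT P h]; omega

/-- bound beyond which a ray avoids a vertex -/
lemma occ (P : GRay G) (v : V) : ∃ b : ℕ, ∀ i, b ≤ i → P.f i ≠ v := by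
  classical
  by_cases h : ∃ j, P.f j = v
  · obtain ⟨j, hj⟩ := h
    exact ⟨j+1, fun i hi hv => by have := P.inj (hv.trans hj.symm); omega⟩
  · exact ⟨0, fun i _ hv => h ⟨i, hv⟩⟩

/-- embedding as a graph hom -/
def embHom {g : V → V} (hg : IsEmb G g) : G →g G := ⟨g, fun h => hg.2 _ _ h⟩

lemma isEmb_iterate {g : V → V} (hg : IsEmb G g) (n : ℕ) : IsEmb G (g^[n]) := by
  induction n with
  | zero => exact ⟨fun a b h => h, fun u v h => h⟩
  | succ n ih =>
    constructor
    · intro a b h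
      rw [Function.iterate_succ_apply', Function.iterate_succ_apply'] at h
      exact ih.1 (hg.1 h)
    · intro u v h
      rw [Function.iterate_succ_apply', Function.iterate_succ_apply']
      exact hg.2 _ _ (ih.2 _ _ h)

lemma getVert_map {G' : SimpleGraph V} (F : G →g G') {u v : V} (p : G.Walk u v) (i : ℕ) :
    (p.map F).getVert i = F (p.getVert i) := by
  induction p generalizing i with
  | nil => simp [Walk.getVert]
  | cons h q ih =>
    cases i with
    | zero => simp [Walk.getVert]
    | succ i => exact ih i

lemma pb_map (hT : G.IsTree) {g : V → V} (hg : IsEmb G g) (a b : V) :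
    pb hT (g a) (g b) = (pb hT a b).map (embHom hg) := by
  have h1 : ((pb hT a b).map (embHom hg)).IsPath :=
    Walk.map_isPath_of_injective (f := embHom hg) hg.1 (pb_isPath hT a b)
  exact (path_eq hT _ h1).symm

lemma dd_emb (hT : G.IsTree) {g : V → V} (hg : IsEmb G g) (a b : V) :
    dd hT (g a) (g b) = dd hT a b := by
  rw [dd, pb_map hT hg]; exact Walk.length_map _ _

lemma mem_pb_emb (hT : G.IsTree) {g : V → V} (hg : IsEmb G g) {a b y : V}
    (hy : y ∈ (pb hT (g a) (g b)).support) : ∃ x, x ∈ (pb hT a b).support ∧ g x = y := by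
  rw [pb_map hT hg] at hy
  replace hy : y ∈ List.map (embHom hg) (pb hT a b).support := by
    rw [← Walk.support_map]; exact hy
  obtain ⟨x, hx, hxy⟩ := List.mem_map.mp hy
  exact ⟨x, hx, hxy⟩

/-- projection of a vertex onto a geodesic ray in a tree -/
lemma proj (hT : G.IsTree) (P : GRay G) (y : V) :
    ∃ t : ℕ, (∀ i, dd hT y (P.f i) = dd hT y (P.f t) + ((i - t) + (t - i))) ∧
      (∀ i, (h : t ≤ i) → pb hT y (P.f i)
          = (pb hT y (P.f t)).append
              ((raySeg P t (i - t)).copy rfl (congrArg P.f (by omega)))) := by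
  classical
  set h : ℕ → ℕ := fun i => dd hT y (P.f i) with hh
  have hne : (Set.range h).Nonempty := ⟨h 0, ⟨0, rfl⟩⟩
  obtain ⟨t0, ht0⟩ := Nat.sInf_mem hne
  have hex : ∃ t, h t = sInf (Set.range h) := ⟨t0, ht0⟩
  set t := Nat.find hex with htdef
  have htmin : h t = sInf (Set.range h) := Nat.find_spec hex
  have hmin : ∀ i, h t ≤ h i := fun i => htmin ▸ Nat.sInf_le ⟨i, rfl⟩
  have hlt : ∀ l, P.f l ∈ (pb hT y (P.f t)).support → l = t := by
    intro l hl
    have hsplit := dd_split hT hl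
    have h1 : dd hT (P.f l) (P.f t) = (t - l) + (l - t) := by
      rw [ray_dd hT P l t]
    have h3 := hmin l
    have h2 : h l + ((t - l) + (l - t)) = h t := by
      show dd hT y (P.f l) + ((t - l) + (l - t)) = dd hT y (P.f t)
      rw [← h1]
      exact hsplit
    omega
  have fwd : ∀ i, (hti : t ≤ i) →
      pb hT y (P.f i) = (pb hT y (P.f t)).append
          ((raySeg P t (i - t)).copy rfl (congrArg P.f (by omega))) := by
    intro i hti
    refine (path_eq hT _ ?_).symm
    rw [Walk.isPath_def, Walk.support_append]
    refine List.Nodup.append ((pb_isPath hT y (P.f t)).support_nodup) ?_ ?_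
    · exact List.Nodup.sublist (List.tail_sublist _)
        (by rw [Walk.support_copy]; exact (raySeg_isPath P t (i - t)).support_nodup)
    · intro z hz1 hz2
      rw [Walk.support_copy] at hz2
      have hz2' : z ∈ (raySeg P t (i-t)).support := List.mem_of_mem_tail hz2
      obtain ⟨l, hl, rfl⟩ := mem_raySeg P hz2'
      have hl0 : t + l = t := hlt _ hz1
      have hnd := (raySeg_isPath P t (i-t)).support_nodup
      rw [Walk.support_eq_cons] at hnd
      have hhead : P.f t ∉ (raySeg P t (i-t)).support.tail := (List.nodup_cons.mp hnd).1
      have hl00 : l = 0 := by omega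
      subst hl00
      exact hhead (by simpa using hz2)
  have bwd : ∀ i, i ≤ t → dd hT y (P.f i) = dd hT y (P.f t) + (t - i) := by
    intro i hit
    have key : pb hT y (P.f i) = (pb hT y (P.f t)).append
        (((raySeg P i (t - i)).copy rfl (congrArg P.f (by omega))).reverse) := by
      refine (path_eq hT _ ?_).symm
      rw [Walk.isPath_def, Walk.support_append]
      refine List.Nodup.append ((pb_isPath hT y (P.f t)).support_nodup) ?_ ?_
      · refine List.Nodup.sublist (List.tail_sublist _) ?_
        rw [Walk.support_reverse]
        exact List.nodup_reverse.mpr (by rw [Walk.support_copy]; exact (raySeg_isPath P i (t-i)).support_nodup)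
      · intro z hz1 hz2
        have hz2' : z ∈ ((raySeg P i (t-i)).copy rfl (congrArg P.f (by omega)) :
            G.Walk (P.f i) (P.f t)).reverse.support := List.mem_of_mem_tail hz2
        rw [Walk.support_reverse, List.mem_reverse, Walk.support_copy] at hz2'
        obtain ⟨l, hl, rfl⟩ := mem_raySeg P hz2'
        have hl0 : i + l = t := hlt _ hz1
        have hz : P.f (i + l) = P.f t := congrArg P.f hl0
        have hnd : (((raySeg P i (t - i)).copy rfl (congrArg P.f (by omega)) :
            G.Walk (P.f i) (P.f t)).reverse).support.Nodup := by
          rw [Walk.support_reverse]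
          exact List.nodup_reverse.mpr (by rw [Walk.support_copy]; exact (raySeg_isPath P i (t-i)).support_nodup)
        rw [Walk.support_eq_cons] at hnd
        have hhead := (List.nodup_cons.mp hnd).1
        rw [hz] at hz2
        exact hhead hz2
    have := congrArg Walk.length key
    rw [Walk.length_append, Walk.length_reverse, Walk.length_copy, raySeg_length] at this
    exact this
  refine ⟨t, ?_, fwd⟩
  intro i
  rcases le_total t i with hti | hit
  · have := congrArg Walk.length (fwd i hti)
    rw [Walk.length_append, Walk.length_copy, raySeg_length] at this
    rw [show (i - t) + (t - i) = i - t by omega]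
    exact this
  · rw [show (i - t) + (t - i) = t - i by omega]
    exact bwd i hit

lemma proj_dd (hT : G.IsTree) (P : GRay G) (y : V) {t : ℕ}
    (hp : ∀ i, dd hT y (P.f i) = dd hT y (P.f t) + ((i - t) + (t - i)))
    {i : ℕ} (hti : t ≤ i) : dd hT y (P.f i) = dd hT y (P.f t) + (i - t) := by
  rw [hp i]; omega

lemma proj_mem (hT : G.IsTree) (P : GRay G) (y : V) {t : ℕ}
    (hp : ∀ i, (h : t ≤ i) → pb hT y (P.f i)
          = (pb hT y (P.f t)).append
              ((raySeg P t (i - t)).copy rfl (congrArg P.f (by omega))))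
    {i l : ℕ} (htl : t ≤ l) (hli : l ≤ i) : P.f l ∈ (pb hT y (P.f i)).support := by
  rw [hp i (le_trans htl hli)]
  rw [Walk.mem_support_append_iff]
  right
  rw [Walk.support_copy]
  have hm := raySeg_mem P (i := t) (j := i - t) (l := l - t) (by omega)
  rw [show t + (l - t) = l by omega] at hm
  exact hm

lemma proj_getVert (hT : G.IsTree) (P : GRay G) (y : V) {t : ℕ}
    (hp : ∀ i, (h : t ≤ i) → pb hT y (P.f i)
          = (pb hT y (P.f t)).append
              ((raySeg P t (i - t)).copy rfl (congrArg P.f (by omega))))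
    {i : ℕ} (hti : t ≤ i) {l : ℕ} (hl : l ≤ i - t) :
    (pb hT y (P.f i)).getVert (dd hT y (P.f t) + l) = P.f (t + l) := by
  rw [hp i hti, Walk.getVert_append]
  have hlen : (pb hT y (P.f t)).length = dd hT y (P.f t) := rfl
  rw [hlen, if_neg (by omega), Walk.getVert_copy, raySeg_getVert]
  congr 1
  omega

lemma isPath_copy {u v u' v' : V} (p : G.Walk u v) (hu : u = u') (hv : v = v')
    (h : p.IsPath) : (p.copy hu hv).IsPath := by
  subst hu; subst hv; rwa [Walk.copy_rfl_rfl]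

/-- two path-prefixes from the same origin meeting at a point agree -/
lemma shared_prefix (hT : G.IsTree) {o a b : V} {l l' : ℕ}
    (hl : l ≤ (pb hT o a).length) (hl' : l' ≤ (pb hT o b).length)
    (h : (pb hT o a).getVert l = (pb hT o b).getVert l') :
    l = l' ∧ ∀ j, j ≤ l → (pb hT o a).getVert j = (pb hT o b).getVert j := by
  have hpa := pb_isPath hT o a
  have hpb := pb_isPath hT o b
  have h1 : dd hT o ((pb hT o a).getVert l) = l := dd_getVert hT hpa hl
  have h2 : dd hT o ((pb hT o b).getVert l') = l' := dd_getVert hT hpb hl'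
  have hll : l = l' := by rw [← h1, h, h2]
  subst hll
  refine ⟨rfl, fun j hj => ?_⟩
  have e1 : wtake (pb hT o a) l = pb hT o ((pb hT o a).getVert l) :=
    path_eq hT _ (wtake_isPath hpa l)
  have e2 : (wtake (pb hT o b) l).copy rfl h.symm = pb hT o ((pb hT o a).getVert l) :=
    path_eq hT _ (isPath_copy _ rfl h.symm (wtake_isPath hpb l))
  have e3 := e1.trans e2.symm
  have e4 := congrArg (fun w => Walk.getVert w j) e3
  simp only [wtake_getVert, Walk.getVert_copy] at e4
  rwa [min_eq_left hj] at e4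

/-- common prefix lemma via the Gromov product -/
lemma cp (hT : G.IsTree) {o a b : V} {J : ℕ}
    (hJ : 2*J + dd hT a b ≤ dd hT o a + dd hT o b) :
    ∀ l, l ≤ J → (pb hT o a).getVert l = (pb hT o b).getVert l := by
  classical
  by_contra hcon
  push_neg at hcon
  have hex : ∃ l, l ≤ J ∧ (pb hT o a).getVert l ≠ (pb hT o b).getVert l := hcon
  set j0 := Nat.find hex with hj0
  obtain ⟨hj0J, hj0ne⟩ := Nat.find_spec hex
  rw [← hj0] at hj0J hj0ne
  have hJa : J ≤ dd hT o a := by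
    have := dd_triangle hT o a b
    omega
  have hJb : J ≤ dd hT o b := by
    have := dd_triangle hT o b a
    have h2 := dd_comm hT a b
    omega
  have hagree : ∀ j, j < j0 → (pb hT o a).getVert j = (pb hT o b).getVert j := by
    intro j hj
    by_contra hne
    exact (Nat.find_min hex hj) ⟨by omega, hne⟩
  have hj01 : 1 ≤ j0 := by
    rcases Nat.eq_zero_or_pos j0 with h0 | h1
    · exfalso; apply hj0ne; rw [h0, Walk.getVert_zero, Walk.getVert_zero]
    · exact h1
  set r := j0 - 1 with hr
  have hrag : (pb hT o a).getVert r = (pb hT o b).getVert r := hagree r (by omega)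
  have hlena : (pb hT o a).length = dd hT o a := rfl
  have hlenb : (pb hT o b).length = dd hT o b := rfl
  set W := ((wdrop (pb hT o a) r).reverse.append
      ((wdrop (pb hT o b) r).copy hrag.symm rfl)) with hW
  have hWpath : W.IsPath := by
    rw [Walk.isPath_def, hW, Walk.support_append, Walk.support_reverse]
    refine List.Nodup.append ?_ ?_ ?_
    · exact List.nodup_reverse.mpr (wdrop_isPath (pb_isPath hT o a) r).support_nodup
    · exact List.Nodup.sublist (List.tail_sublist _)
        (by rw [Walk.support_copy]; exact (wdrop_isPath (pb_isPath hT o b) r).support_nodup)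
    · intro z hz1 hz2
      rw [List.mem_reverse] at hz1
      rw [Walk.support_copy] at hz2
      have hz2' : z ∈ (wdrop (pb hT o b) r).support := List.mem_of_mem_tail hz2
      obtain ⟨i1, hgv1, hi1⟩ := Walk.mem_support_iff_exists_getVert.mp hz1
      obtain ⟨i2, hgv2, hi2⟩ := Walk.mem_support_iff_exists_getVert.mp hz2'
      rw [wdrop_getVert] at hgv1 hgv2
      rw [wdrop_length] at hi1 hi2
      -- z ≠ head of wdrop q r
      have hznehead : z ≠ (pb hT o b).getVert r := by
        intro hzh
        have hnd := (wdrop_isPath (pb_isPath hT o b) r).support_nodup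
        rw [Walk.support_eq_cons] at hnd
        have hni := (List.nodup_cons.mp hnd).1
        rw [hzh] at hz2
        exact hni hz2
      have hi2pos : 1 ≤ i2 := by
        rcases Nat.eq_zero_or_pos i2 with h0 | h1
        · exfalso; apply hznehead; rw [← hgv2, h0, Nat.add_zero]
        · exact h1
      have hsh := shared_prefix hT (o := o) (a := a) (b := b)
        (l := r + i1) (l' := r + i2) (by omega) (by omega) (by rw [hgv1, hgv2])
      obtain ⟨heq, hall⟩ := hsh
      have : (pb hT o a).getVert j0 = (pb hT o b).getVert j0 := hall j0 (by omega)
      exact hj0ne this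
  have hWeq := path_eq hT W hWpath
  have hWlen : W.length = (dd hT o a - r) + (dd hT o b - r) := by
    rw [hW, Walk.length_append, Walk.length_reverse, Walk.length_copy,
      wdrop_length, wdrop_length]
    rfl
  have hddab : dd hT a b = W.length := by rw [hWeq]; rfl
  omega

/-- walk between two tail points of a ray avoiding v -/
lemma ray_walk_between (P : GRay G) {v : V} {m n : ℕ}
    (h1 : ∀ i, m ≤ i → P.f i ≠ v) (h2 : ∀ i, n ≤ i → P.f i ≠ v) :
    ∃ w : G.Walk (P.f m) (P.f n), v ∉ w.support := by
  rcases le_total m n with h | h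
  · refine ⟨(raySeg P m (n - m)).copy rfl (congrArg P.f (by omega)), fun hv => ?_⟩
    rw [Walk.support_copy] at hv
    obtain ⟨l, hl, hlv⟩ := mem_raySeg P hv
    exact h1 (m+l) (by omega) hlv.symm
  · refine ⟨((raySeg P n (m - n)).copy rfl (congrArg P.f (by omega))).reverse, fun hv => ?_⟩
    rw [Walk.support_reverse, List.mem_reverse, Walk.support_copy] at hv
    obtain ⟨l, hl, hlv⟩ := mem_raySeg P hv
    exact h2 (n+l) (by omega) hlv.symm

lemma rayEquiv_symm {P Q : GRay G} (h : RayEquiv G P Q) : RayEquiv G Q P := by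
  intro v
  obtain ⟨m, n, h1, h2, w, hw⟩ := h v
  exact ⟨n, m, h2, h1, w.reverse, by rwa [Walk.support_reverse, List.mem_reverse]⟩

lemma rayEquiv_trans {P Q Rr : GRay G} (hPQ : RayEquiv G P Q) (hQR : RayEquiv G Q Rr) :
    RayEquiv G P Rr := by
  intro v
  obtain ⟨m1, n1, a1, b1, w1, hw1⟩ := hPQ v
  obtain ⟨m2, n2, a2, b2, w2, hw2⟩ := hQR v
  obtain ⟨wq, hwq⟩ := ray_walk_between Q b1 a2
  refine ⟨m1, n2, a1, b2, w1.append (wq.append w2), fun hv => ?_⟩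
  rw [Walk.mem_support_append_iff] at hv
  rcases hv with hv | hv
  · exact hw1 hv
  · rw [Walk.mem_support_append_iff] at hv
    rcases hv with hv | hv
    · exact hwq hv
    · exact hw2 hv

/-- the tail of a ray -/
def tailRay (P : GRay G) (a : ℕ) : GRay G where
  f := fun i => P.f (a + i)
  inj := fun i j h => by have := P.inj h; omega
  adj := fun n => P.adj (a + n)

lemma rayEquiv_tail (P : GRay G) (a : ℕ) : RayEquiv G P (tailRay P a) := by
  intro v
  obtain ⟨b0, hb0⟩ := occ P v
  obtain ⟨w, hw⟩ := ray_walk_between P (m := b0) (n := a + b0) hb0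
    (fun i hi => hb0 i (by omega))
  exact ⟨b0, b0, hb0, fun j hj => hb0 (a+j) (by omega), w, hw⟩

/-- the direction ray is translated forward by some k ≥ 1 -/
lemma dir_shift (hT : G.IsTree) {g : V → V} (hg : IsEmb G g) (hne : ¬ Elliptic G g)
    {R : GRay G} (hR : DirectionRay G g R) :
    ∃ k, 1 ≤ k ∧ ∀ i, g (R.f i) = R.f (i + k) := by
  classical
  choose σ hσ using hR
  have hinj : Function.Injective σ := by
    intro i j h
    exact R.inj (hg.1 (by rw [hσ i, hσ j, h]))
  have hadj : ∀ i, (σ (i+1) = σ i + 1) ∨ (σ (i+1) + 1 = σ i) := by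
    intro i
    have h := hg.2 _ _ (R.adj i)
    rw [hσ i, hσ (i+1)] at h
    have hd := dd_adj hT h
    rw [ray_dd hT R] at hd
    have hne' : σ i ≠ σ (i+1) := fun hc => by have := hinj hc; omega
    omega
  have hup : ∀ i, σ (i+1) = σ i + 1 := by
    by_contra hc
    push_neg at hc
    obtain ⟨i0, hi0⟩ := hc
    have hdown : σ (i0+1) + 1 = σ i0 := (hadj i0).resolve_left hi0
    have hdesc : ∀ j, σ (i0 + j + 1) + 1 = σ (i0 + j) := by
      intro j
      induction j with
      | zero => exact hdown
      | succ j ih =>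
        rcases hadj (i0 + j + 1) with hu | hd
        · exfalso
          have heq : σ (i0 + j + 1 + 1) = σ (i0 + j) := by omega
          have := hinj heq
          omega
        · exact hd
    have htot : ∀ j, σ (i0 + j) + j = σ i0 := by
      intro j
      induction j with
      | zero => rfl
      | succ j ih =>
        have := hdesc j
        have harith : i0 + (j+1) = i0 + j + 1 := by omega
        rw [harith]
        omega
    have := htot (σ i0 + 1)
    omega
  have hlin : ∀ i, σ i = σ 0 + i := by
    intro i
    induction i with
    | zero => rfl
    | succ i ih =>
      rw [hup i, ih]
      omega
  have hk1 : 1 ≤ σ 0 := by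
    rcases Nat.eq_zero_or_pos (σ 0) with h0 | h1
    · exfalso
      apply hne
      left
      exact ⟨R.f 0, by rw [hσ 0, h0]⟩
    · exact h1
  refine ⟨σ 0, hk1, fun i => ?_⟩
  rw [hσ i, hlin i]
  exact congrArg R.f (by omega)

lemma shift_iter {g : V → V} {R : GRay G} {k : ℕ}
    (hshift : ∀ i, g (R.f i) = R.f (i + k)) :
    ∀ n i, g^[n] (R.f i) = R.f (i + n * k) := by
  intro n
  induction n with
  | zero => intro i; simp
  | succ n ih =>
    intro i
    rw [Function.iterate_succ_apply', ih i, hshift]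
    exact congrArg R.f (by ring)

lemma shift_iter_back {g : V → V} {Q : GRay G} {a k2 : ℕ}
    (hb : ∀ r, g (Q.f (a + r + k2)) = Q.f (a + r)) :
    ∀ n r, g^[n] (Q.f (a + r + n * k2)) = Q.f (a + r) := by
  intro n
  induction n with
  | zero => intro r; simp
  | succ n ih =>
    intro r
    rw [Function.iterate_succ_apply]
    have h1 : a + r + (n+1) * k2 = a + (r + n * k2) + k2 := by ring
    rw [h1, hb (r + n * k2)]
    have h2 : a + (r + n * k2) = a + r + n * k2 := by ring
    rw [h2]
    exact ih r

/-- two forward-translated rays are equivalent -/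
lemma fwd_unique (hT : G.IsTree) {g : V → V} (hg : IsEmb G g) {P Q : GRay G} {k k' : ℕ}
    (hk : 1 ≤ k) (hk' : 1 ≤ k')
    (hP : ∀ i, g (P.f i) = P.f (i+k)) (hQ : ∀ i, g (Q.f i) = Q.f (i+k')) :
    RayEquiv G P Q := by
  intro v
  obtain ⟨bP, hbP⟩ := occ P v
  obtain ⟨bQ, hbQ⟩ := occ Q v
  obtain ⟨τ, hτdd, hτstruct⟩ := proj hT P v
  set c := dd hT (P.f 0) (Q.f 0) with hc
  set n := bP + bQ + τ + c + 1 with hn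
  have hiter : ∀ m : ℕ, dd hT (P.f (m*k)) (Q.f (m*k')) = c := by
    intro m
    induction m with
    | zero => simp [hc]
    | succ m ih =>
      have hdd := dd_emb hT hg (P.f (m*k)) (Q.f (m*k'))
      rw [hP, hQ] at hdd
      rw [show m*k+k = (m+1)*k by ring, show m*k'+k' = (m+1)*k' by ring] at hdd
      rw [hdd]
      exact ih
  have hnk : n ≤ n * k := by nlinarith
  have hnk' : n ≤ n * k' := by nlinarith
  refine ⟨n*k, n*k', fun i hi => hbP i (by omega), fun j hj => hbQ j (by omega),
    pb hT (P.f (n*k)) (Q.f (n*k')), fun hv => ?_⟩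
  have hsplit := dd_split hT hv
  have h1 := hτdd (n*k)
  have h2 : dd hT (P.f (n*k)) v = dd hT v (P.f (n*k)) := dd_comm hT _ _
  have h3 := hiter n
  omega

/-- equivalent rays in a tree share a common tail -/
lemma common_tail (hT : G.IsTree) {P Q : GRay G} (hEq : RayEquiv G P Q) :
    ∃ a b : ℕ, ∀ r, P.f (a + r) = Q.f (b + r) := by
  classical
  have hproj : ∀ n : ℕ, ∃ t, (∀ i, dd hT (Q.f n) (P.f i)
        = dd hT (Q.f n) (P.f t) + ((i-t)+(t-i))) ∧
      (∀ i, (h : t ≤ i) → pb hT (Q.f n) (P.f i)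
          = (pb hT (Q.f n) (P.f t)).append
              ((raySeg P t (i - t)).copy rfl (congrArg P.f (by omega)))) :=
    fun n => proj hT P (Q.f n)
  choose tn hdd hstruct using hproj
  have hstar : ∀ v : V, ∃ m0 n0 : ℕ, ∀ m n, m0 ≤ m → n0 ≤ n →
      v ∉ (pb hT (P.f m) (Q.f n)).support := by
    intro v
    obtain ⟨m', n', h1, h2, w0, hw0⟩ := hEq v
    refine ⟨m', n', fun m n hm hn hv => ?_⟩
    have hW : v ∉ ((((raySeg P m' (m - m')).copy rfl
          (congrArg P.f (by omega))).reverse.append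
        (w0.append ((raySeg Q n' (n - n')).copy rfl
          (congrArg Q.f (by omega))))) : G.Walk (P.f m) (Q.f n)).support := by
      intro hv'
      rw [Walk.mem_support_append_iff] at hv'
      rcases hv' with hv' | hv'
      · rw [Walk.support_reverse, List.mem_reverse, Walk.support_copy] at hv'
        obtain ⟨l, hl, hlv⟩ := mem_raySeg P hv'
        exact h1 (m'+l) (by omega) hlv.symm
      · rw [Walk.mem_support_append_iff] at hv'
        rcases hv' with hv' | hv'
        · exact hw0 hv'
        · rw [Walk.support_copy] at hv'
          obtain ⟨l, hl, hlv⟩ := mem_raySeg Q hv'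
          exact h2 (n'+l) (by omega) hlv.symm
    exact hW (pb_subset hT _ hv)
  have hpi : ∀ L : ℕ, ∃ n1, ∀ n, n1 ≤ n → L < tn n := by
    intro L
    obtain ⟨m0, n0, hmn⟩ := hstar (P.f (L+1))
    refine ⟨n0, fun n hn => ?_⟩
    by_contra hcon
    push_neg at hcon
    have hmem : P.f (L+1) ∈ (pb hT (Q.f n) (P.f (max m0 (L+1)))).support :=
      proj_mem hT P (Q.f n) (hstruct n) (by omega) (le_max_right _ _)
    have hrev : pb hT (P.f (max m0 (L+1))) (Q.f n)
        = (pb hT (Q.f n) (P.f (max m0 (L+1)))).reverse :=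
      (path_eq hT _ ((pb_isPath hT _ _).reverse)).symm
    apply hmn (max m0 (L+1)) n (le_max_left _ _) hn
    rw [hrev, Walk.support_reverse, List.mem_reverse]
    exact hmem
  obtain ⟨s0, hs0dd, hs0struct⟩ := proj hT Q (P.f 0)
  set ε := dd hT (P.f 0) (Q.f s0) with hε
  refine ⟨ε, s0, fun r => ?_⟩
  obtain ⟨n1, hn1⟩ := hpi (ε + r)
  set n := n1 + s0 + r + ε with hndef
  have htn : ε + r < tn n := hn1 n (by omega)
  set m := tn n with hm
  have hgrom : 2 * (tn n) + dd hT (P.f m) (Q.f n)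
      ≤ dd hT (P.f 0) (P.f m) + dd hT (P.f 0) (Q.f n) := by
    have e1 : dd hT (P.f m) (Q.f n) = dd hT (Q.f n) (P.f m) := dd_comm hT _ _
    have e2 := hdd n m
    have e3 : dd hT (P.f 0) (Q.f n) = dd hT (Q.f n) (P.f 0) := dd_comm hT _ _
    have e4 := hdd n 0
    have e5 : dd hT (P.f 0) (P.f m) = m := rayDist' hT P (by omega)
    omega
  have hcp := cp hT hgrom (ε + r) (by omega)
  have hq : (pb hT (P.f 0) (Q.f n)).getVert (ε + r) = Q.f (s0 + r) := by
    have := proj_getVert hT Q (P.f 0) hs0struct (show s0 ≤ n by omega)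
      (show r ≤ n - s0 by omega)
    rw [← hε] at this
    exact this
  have hp : (pb hT (P.f 0) (P.f m)).getVert (ε + r) = P.f (ε + r) := by
    have hseg : ((raySeg P 0 m).copy rfl (congrArg P.f (by omega)) : G.Walk (P.f 0) (P.f m))
        = pb hT (P.f 0) (P.f m) :=
      path_eq hT _ (isPath_copy _ rfl _ (raySeg_isPath P 0 m))
    rw [← hseg, Walk.getVert_copy, raySeg_getVert]
    exact congrArg P.f (by omega)
  rw [← hq, ← hcp, hp]

/-- if `g^[n] w` is not in the `u`-neighbourhood of the direction, then some vertex on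
the path from `w` to `R.f 0` is mapped to `u` by `g^[n]` -/
lemma badness (hT : G.IsTree) {g : V → V} (hg : IsEmb G g) {R : GRay G} {k : ℕ}
    (hshift : ∀ i, g (R.f i) = R.f (i + k)) {u : V} {tu : ℕ}
    (hproj_dd : ∀ i, dd hT u (R.f i) = dd hT u (R.f tu) + ((i-tu)+(tu-i)))
    {n : ℕ} (hn : tu < n * k) (w : V) (hbad : ¬ InComp G u R (g^[n] w)) :
    ∃ x', g^[n] x' = u ∧ x' ∈ (pb hT w (R.f 0)).support := by
  have hRu : ∀ i, tu < i → R.f i ≠ u := by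
    intro i hi hiu
    have h0 : dd hT u (R.f i) = 0 := by rw [hiu, dd_self]
    have := hproj_dd i
    omega
  set m := max (n*k) (tu+1) with hm
  have hiter : g^[n] (R.f 0) = R.f (n*k) := by
    have := shift_iter hshift n 0
    rwa [show (0:ℕ) + n*k = n*k by omega] at this
  set W : G.Walk (g^[n] w) (R.f m) :=
    (((pb hT w (R.f 0)).map (embHom (isEmb_iterate hg n))).copy rfl hiter).append
      ((raySeg R (n*k) (m - n*k)).copy rfl (congrArg R.f (by omega))) with hW
  have hmem : u ∈ W.support := by
    by_contra hu
    exact hbad ⟨m, fun i hi => hRu i (by omega), W, hu⟩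
  rw [hW] at hmem
  erw [Walk.mem_support_append_iff] at hmem
  rcases hmem with h | h
  · erw [Walk.support_copy, Walk.support_map] at h
    obtain ⟨x', hx', hgx'⟩ := List.mem_map.mp h
    exact ⟨x', hgx', hx'⟩
  · exfalso
    rw [Walk.support_copy] at h
    obtain ⟨l, hl, hlu⟩ := mem_raySeg R h
    exact hRu (n*k+l) (by omega) hlu.symm

/-- the hyperbolic case -/
lemma hyperbolic_case (hT : G.IsTree) {g : V → V} (hg : IsEmb G g) (hne : ¬ Elliptic G g)
    {R : GRay G} (hR : DirectionRay G g R) (Rm : GRay G) (hfix : FixesEnd G g Rm)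
    (hnequiv : ¬ RayEquiv G Rm R) (u v : V) :
    ∃ N, ∀ n, N ≤ n → ∀ w, ¬ InComp G v Rm w → InComp G u R (g^[n] w) := by
  obtain ⟨k, hk1, hshift⟩ := dir_shift hT hg hne hR
  obtain ⟨T', hT'f, hT'eq⟩ := hfix
  obtain ⟨a, b, hab⟩ := common_tail hT hT'eq
  have hgr : ∀ r, g (Rm.f (a+r)) = Rm.f (b+r) := fun r => by rw [← hT'f, hab]
  rcases lt_trichotomy a b with hlt | heq | hgt
  · exfalso
    set k' := b - a with hk'
    have hQ : ∀ i, g ((tailRay Rm a).f i) = (tailRay Rm a).f (i + k') := by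
      intro i
      show g (Rm.f (a + i)) = Rm.f (a + (i + k'))
      rw [hgr i]
      exact congrArg Rm.f (by omega)
    have h1 : RayEquiv G R (tailRay Rm a) := fwd_unique hT hg hk1 (by omega) hshift hQ
    exact hnequiv (rayEquiv_trans (rayEquiv_tail Rm a) (rayEquiv_symm h1))
  · exfalso
    apply hne
    left
    refine ⟨Rm.f a, ?_⟩
    have h := hgr 0
    rw [← heq] at h
    simpa using h
  · -- backward shift by k2 := a - b ≥ 1
    set k2 := a - b with hk2
    have hbk : ∀ r, g (Rm.f (b + r + k2)) = Rm.f (b + r) := by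
      intro r
      have h := hgr r
      rw [show b + r + k2 = a + r by omega]
      exact h
    obtain ⟨tu, htu_dd, htu_str⟩ := proj hT R u
    obtain ⟨tu', htu'_dd, htu'_str⟩ := proj hT Rm u
    obtain ⟨tv, htv_dd, htv_str⟩ := proj hT R v
    obtain ⟨tv', htv'_dd, htv'_str⟩ := proj hT Rm v
    obtain ⟨bv, hbv⟩ := occ Rm v
    set Du := dd hT u (R.f tu) with hDu
    set Du' := dd hT u (Rm.f tu') with hDu'
    set Ev := dd hT v (R.f tv) with hEv
    set Ev' := dd hT v (Rm.f tv') with hEv'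
    set N := tu + tu' + tv + tv' + Du + Du' + Ev + Ev' + a + b + bv + k + k2 + 2 with hN
    refine ⟨N, fun n hn w hvw => ?_⟩
    by_contra hbad
    have hnk : n ≤ n * k := Nat.le_mul_of_pos_right n (by omega)
    have hnk2 : n ≤ n * k2 := Nat.le_mul_of_pos_right n (by omega)
    obtain ⟨x', hgx', hx'mem⟩ := badness hT hg hshift htu_dd (by omega) w hbad
    set s := tu' + tv' + bv + a with hs
    set i := b + (n * k2 + s) with hidef
    have hvi : v ∈ (pb hT w (Rm.f i)).support := by
      by_contra hvi
      exact hvw ⟨i, fun j hj => hbv j (by omega), pb hT w (Rm.f i), hvi⟩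
    have htri : v ∈ (pb hT w x').support ∨ v ∈ (pb hT x' (Rm.f i)).support := by
      have hsub := pb_subset hT ((pb hT w x').append (pb hT x' (Rm.f i)))
      have hmm := hsub hvi
      rw [Walk.mem_support_append_iff] at hmm
      exact hmm
    rcases htri with hcase | hcase
    · -- v between w and x'
      obtain ⟨i1, hgv1, hi1⟩ := Walk.mem_support_iff_exists_getVert.mp hx'mem
      have hpbwx : (wtake (pb hT w (R.f 0)) i1).copy rfl hgv1 = pb hT w x' :=
        path_eq hT _ (isPath_copy _ rfl hgv1 (wtake_isPath (pb_isPath hT w (R.f 0)) i1))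
      have hvsub : v ∈ (pb hT w (R.f 0)).support := by
        rw [← hpbwx, Walk.support_copy] at hcase
        exact wtake_support_subset _ _ hcase
      have hs1 := dd_split hT hvsub
      have hs2 := dd_split hT hx'mem
      have hs3 := dd_split hT hcase
      have hiso : dd hT x' (R.f 0) = Du + (n*k - tu) := by
        have h1 := dd_emb hT (isEmb_iterate hg n) x' (R.f 0)
        have h2 : g^[n] (R.f 0) = R.f (n*k) := by
          have := shift_iter hshift n 0
          rwa [show (0:ℕ) + n*k = n*k by omega] at this
        rw [hgx', h2] at h1
        rw [← h1]
        exact proj_dd hT R u htu_dd (by omega)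
      have hv0 : dd hT v (R.f 0) = Ev + tv := by
        have := htv_dd 0
        omega
      omega
    · -- v between x' and Rm.f i
      have hsp := dd_split hT hcase
      have hiso : dd hT x' (Rm.f i) = Du' + ((b + s) - tu') := by
        have h1 := dd_emb hT (isEmb_iterate hg n) x' (Rm.f i)
        have h2 : g^[n] (Rm.f i) = Rm.f (b + s) := by
          have h3 := shift_iter_back hbk n s
          rwa [show b + s + n * k2 = i by omega] at h3
        rw [hgx', h2] at h1
        rw [← h1]
        exact proj_dd hT Rm u htu'_dd (by omega)
      have h4 : dd hT v (Rm.f i) = Ev' + (i - tv') := proj_dd hT Rm v htv'_dd (by omega)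
      omega

/-- the parabolic case -/
lemma parabolic_case (hT : G.IsTree) {g : V → V} (hg : IsEmb G g) (hne : ¬ Elliptic G g)
    {R : GRay G} (hR : DirectionRay G g R)
    (hpar : ∀ S : GRay G, FixesEnd G g S → RayEquiv G S R) (u : V) :
    ∃ N, ∀ n, N ≤ n → ∀ w, InComp G u R (g^[n] w) := by
  classical
  obtain ⟨k, hk1, hshift⟩ := dir_shift hT hg hne hR
  obtain ⟨tu, htu_dd, htu_str⟩ := proj hT R u
  set Du := dd hT u (R.f tu) with hDu
  by_cases hsur : ∀ n : ℕ, ∃ y, g^[n] y = u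
  · -- u has preimages of all orders: construct a second fixed end, contradiction
    exfalso
    choose xx hxx using hsur
    have hstep : ∀ n j, g^[j] (xx (n+j)) = xx n := by
      intro n j
      apply (isEmb_iterate hg n).1
      rw [← Function.iterate_add_apply, hxx (n+j), hxx n]
    have hg1 : ∀ n, g (xx (n+1)) = xx n := by
      intro n
      have := hstep n 1
      rwa [Function.iterate_one] at this
    have hdx : ∀ n i, dd hT (xx n) (R.f i) = dd hT u (R.f (i + n*k)) := by
      intro n i
      have h1 := dd_emb hT (isEmb_iterate hg n) (xx n) (R.f i)
      rw [hxx n, shift_iter hshift n i] at h1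
      exact h1.symm
    have hdx' : ∀ n i, tu ≤ i + n*k → dd hT (xx n) (R.f i) = Du + (i + n*k - tu) := by
      intro n i h
      rw [hdx n i]
      have := htu_dd (i + n*k)
      omega
    have hL : ∀ n : ℕ, tu ≤ n*k → dd hT (R.f 0) (xx n) = Du + (n*k - tu) := by
      intro n hn
      rw [dd_comm]
      have := hdx' n 0 (by omega)
      rwa [show (0:ℕ) + n*k = n*k by omega] at this
    have hu0 : dd hT u (R.f 0) = Du + tu := by
      have := htu_dd 0
      omega
    have hL2 : ∀ n : ℕ, dd hT (R.f 0) (xx n) ≤ Du + tu + n*k := by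
      intro n
      have h1 : dd hT (R.f 0) (xx n) = dd hT (xx n) (R.f 0) := dd_comm hT _ _
      have h2 := hdx n 0
      have h3 := htu_dd (0 + n*k)
      omega
    have hxd : ∀ n m, n ≤ m →
        dd hT (xx n) (xx m) ≤ 2*Du + 2*tu + (m-n)*k := by
      intro n m hnm
      have h1 : dd hT (xx n) (xx m) = dd hT u (xx (m-n)) := by
        have he := dd_emb hT (isEmb_iterate hg n) (xx n) (xx m)
        rw [hxx n] at he
        have : g^[n] (xx m) = xx (m-n) := by
          have := hstep (m-n) n
          rwa [show m - n + n = m by omega] at this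
        rw [this] at he
        exact he.symm
      have h3 : dd hT u (xx (m-n)) ≤ dd hT u (R.f 0) + dd hT (R.f 0) (xx (m-n)) :=
        dd_triangle hT _ _ _
      have h4 := hL2 (m-n)
      omega
    -- common prefix agreement
    have agree : ∀ j n m, n ≤ m → tu ≤ n*k → 2*j + 4*tu ≤ 2*(n*k) →
        ∀ l, l ≤ j → (pb hT (R.f 0) (xx n)).getVert l = (pb hT (R.f 0) (xx m)).getVert l := by
      intro j n m hnm htn hcond
      apply cp hT
      have hmono : n*k ≤ m*k := Nat.mul_le_mul_right k hnm
      have harith : (m-n)*k = m*k - n*k := by rw [Nat.sub_mul]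
      have hLn := hL n htn
      have hLm := hL m (by omega)
      have hb := hxd n m hnm
      omega
    set ν : ℕ → ℕ := fun j => j + 2*tu + 2 with hν
    have hνk : ∀ j, tu ≤ (ν j) * k := by
      intro j
      have : ν j ≤ ν j * k := Nat.le_mul_of_pos_right _ (by omega)
      simp only [hν] at this ⊢
      omega
    have hνcond : ∀ j, 2*j + 4*tu ≤ 2*((ν j)*k) := by
      intro j
      have : ν j ≤ ν j * k := Nat.le_mul_of_pos_right _ (by omega)
      simp only [hν] at this ⊢
      omega
    have hlen : ∀ j n, ν j ≤ n → j ≤ (pb hT (R.f 0) (xx n)).length := by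
      intro j n hjn
      have h1 : (pb hT (R.f 0) (xx n)).length = dd hT (R.f 0) (xx n) := rfl
      have hkn : tu ≤ n * k := by
        have h2 := hνk j
        have h3 : (ν j) * k ≤ n * k := Nat.mul_le_mul_right k hjn
        omega
      have h4 := hL n hkn
      have h5 : n ≤ n * k := Nat.le_mul_of_pos_right _ (by omega)
      simp only [hν] at hjn
      omega
    set Sf : ℕ → V := fun j => (pb hT (R.f 0) (xx (ν j))).getVert j with hSf
    have agree' : ∀ j n, ν j ≤ n → (pb hT (R.f 0) (xx n)).getVert j = Sf j := by
      intro j n hjn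
      rw [hSf]
      simp only []
      exact (agree j (ν j) n hjn (hνk j) (hνcond j) j (le_refl j)).symm
    have hSd : ∀ j, dd hT (R.f 0) (Sf j) = j := by
      intro j
      rw [hSf]
      simp only []
      exact dd_getVert hT (pb_isPath hT _ _) (hlen j (ν j) (le_refl _))
    have hνmono : ∀ j j', j ≤ j' → ν j ≤ ν j' := by
      intro j j' h
      simp only [hν]
      omega
    set S : GRay G := ⟨Sf, by
        intro j j' h
        have h1 := hSd j
        rw [h] at h1
        rw [hSd j'] at h1
        omega,
      by
        intro j
        have hn : ν j ≤ ν (j+1) := hνmono j (j+1) (by omega)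
        rw [← agree' j (ν (j+1)) hn, ← agree' (j+1) (ν (j+1)) (le_refl _)]
        exact Walk.adj_getVert_succ _ (by
          have := hlen (j+1) (ν (j+1)) (le_refl _)
          omega)⟩ with hS
    have hS0 : Sf 0 = R.f 0 := by
      rw [hSf]
      simp only []
      exact Walk.getVert_zero _
    -- the action of g on S
    have hgS : ∀ j, g (Sf (j+k)) = Sf j := by
      intro j
      set n := ν (j + k) + ν j + tu + 2 with hn
      have hn1 : ν (j+k) ≤ n := by omega
      have hn2 : ν j ≤ n - 1 := by omega
      have hkn1 : tu ≤ (n-1) * k := by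
        have h1 := hνk j
        have h3 : (ν j) * k ≤ (n-1) * k := Nat.mul_le_mul_right k hn2
        omega
      -- the image path
      have hmap : pb hT (g (R.f 0)) (g (xx n))
          = (pb hT (R.f 0) (xx n)).map (embHom hg) := pb_map hT hg _ _
      have hg0 : g (R.f 0) = R.f k := by
        have := hshift 0
        rwa [show (0:ℕ) + k = k by omega] at this
      have hgxn : g (xx n) = xx (n-1) := by
        have := hg1 (n-1)
        rwa [show n - 1 + 1 = n by omega] at this
      -- the alternative path
      set W' : G.Walk (R.f k) (xx (n-1)) :=
        (((raySeg R 0 k).copy rfl (congrArg R.f (by omega))).reverse).append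
          (pb hT (R.f 0) (xx (n-1))) with hW'
      have hW'path : W'.IsPath := by
        rw [hW', Walk.isPath_def, Walk.support_append, Walk.support_reverse]
        refine List.Nodup.append ?_ ?_ ?_
        · exact List.nodup_reverse.mpr
            (by rw [Walk.support_copy]; exact (raySeg_isPath R 0 k).support_nodup)
        · exact List.Nodup.sublist (List.tail_sublist _) (pb_isPath hT _ _).support_nodup
        · intro z hz1 hz2
          rw [List.mem_reverse, Walk.support_copy] at hz1
          obtain ⟨l, hl, hzeq⟩ := mem_raySeg R hz1
          have hzeq' : z = R.f l := hzeq.trans (congrArg R.f (by omega))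
          subst hzeq'
          have hz2' : R.f l ∈ (pb hT (R.f 0) (xx (n-1))).support :=
            List.mem_of_mem_tail hz2
          have hsplit := dd_split hT hz2'
          have hd1 : dd hT (R.f 0) (R.f l) = l - 0 := rayDist' hT R (by omega)
          have hd2 : dd hT (R.f l) (xx (n-1)) = Du + (l + (n-1)*k - tu) := by
            rw [dd_comm]
            exact hdx' (n-1) l (by omega)
          have hd3 := hL (n-1) (by omega)
          have hl0 : l = 0 := by omega
          subst hl0
          have hnd := (pb_isPath hT (R.f 0) (xx (n-1))).support_nodup
          rw [Walk.support_eq_cons] at hnd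
          have hni := (List.nodup_cons.mp hnd).1
          exact hni hz2
      have hWmap : (((pb hT (R.f 0) (xx n)).map (embHom hg)).copy hg0 hgxn)
          = pb hT (R.f k) (xx (n-1)) :=
        path_eq hT _ (isPath_copy _ _ _
          (Walk.map_isPath_of_injective hg.1 (pb_isPath hT _ _)))
      have hW'eq : W' = pb hT (R.f k) (xx (n-1)) := path_eq hT _ hW'path
      -- evaluate getVert at j + k
      have e1 := congrArg (fun p => Walk.getVert p (j+k)) (hWmap.trans hW'eq.symm)
      erw [Walk.getVert_copy, getVert_map] at e1
      have e2 : (pb hT (R.f 0) (xx n)).getVert (j+k) = Sf (j+k) := agree' (j+k) n hn1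
      rw [e2] at e1
      have e3 : W'.getVert (j+k) = (pb hT (R.f 0) (xx (n-1))).getVert j := by
        rw [hW', Walk.getVert_append, Walk.length_reverse, Walk.length_copy, raySeg_length]
        rw [if_neg (by omega)]
        congr 1
        omega
      rw [e3, agree' j (n-1) hn2] at e1
      exact e1
    -- S is a fixed end
    set S' : GRay G := ⟨fun j => g (Sf j), fun j j' h => S.inj (hg.1 h),
      fun j => hg.2 _ _ (S.adj j)⟩ with hS'
    have hS'S : RayEquiv G S' S := by
      intro v
      obtain ⟨b1, hb1⟩ := occ S' v
      obtain ⟨b2, hb2⟩ := occ S v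
      set i0 := b1 + b2 + k with hi0
      have hkey : S'.f (i0 + k) = Sf i0 := hgS i0
      refine ⟨i0 + k, i0, fun i hi => hb1 i (by omega), fun j hj => hb2 j (by omega),
        (Walk.nil : G.Walk (Sf i0) (Sf i0)).copy hkey.symm rfl, ?_⟩
      rw [Walk.support_copy, Walk.support_nil]
      intro hv
      rcases List.mem_singleton.mp hv with rfl
      exact hb2 i0 (by omega) rfl
    have hfixS : FixesEnd G g S := ⟨S', fun n => rfl, hS'S⟩
    -- S is not equivalent to R
    have hnoteq : ¬ RayEquiv G S R := by
      intro hcon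
      obtain ⟨m, n', h1, h2, w0, hw0⟩ := hcon (R.f 0)
      have hm1 : 1 ≤ m := by
        rcases Nat.eq_zero_or_pos m with h0 | h; swap
        · exact h
        exfalso
        exact h1 0 (by omega) hS0
      have hn'1 : 1 ≤ n' := by
        rcases Nat.eq_zero_or_pos n' with h0 | h; swap
        · exact h
        exfalso
        exact h2 0 (by omega) rfl
      -- the unique path from S.f m to R.f n' passes through R.f 0
      set N' := ν m with hN'
      set γN := pb hT (R.f 0) (xx N') with hγN
      have hSm : γN.getVert m = Sf m := agree' m N' (le_refl _)
      set W2 : G.Walk (Sf m) (R.f n') :=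
        ((wtake γN m).copy rfl hSm).reverse.append
          ((raySeg R 0 n').copy rfl (congrArg R.f (by omega))) with hW2
      have hW2path : W2.IsPath := by
        rw [hW2, Walk.isPath_def, Walk.support_append, Walk.support_reverse]
        refine List.Nodup.append ?_ ?_ ?_
        · exact List.nodup_reverse.mpr
            (by rw [Walk.support_copy]
                exact (wtake_isPath (pb_isPath hT _ _) m).support_nodup)
        · exact List.Nodup.sublist (List.tail_sublist _)
            (by rw [Walk.support_copy]; exact (raySeg_isPath R 0 n').support_nodup)
        · intro z hz1 hz2
          rw [List.mem_reverse, Walk.support_copy] at hz1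
          have hz1' : z ∈ γN.support := wtake_support_subset _ _ hz1
          rw [Walk.support_copy] at hz2
          have hz2a : z ∈ (raySeg R 0 n').support := List.mem_of_mem_tail hz2
          obtain ⟨l, hl, hzeq⟩ := mem_raySeg R hz2a
          have hzeq' : z = R.f l := hzeq.trans (congrArg R.f (by omega))
          subst hzeq'
          have hsplit := dd_split hT hz1'
          have hd1 : dd hT (R.f 0) (R.f l) = l - 0 := rayDist' hT R (by omega)
          have hd2 : dd hT (R.f l) (xx N') = Du + (l + N'*k - tu) := by
            rw [dd_comm]
            exact hdx' N' l (by rw [hN']; have := hνk m; omega)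
          have hd3 := hL N' (hνk m)
          have hl0 : l = 0 := by omega
          subst hl0
          have hnd := (raySeg_isPath R 0 n').support_nodup
          rw [Walk.support_eq_cons] at hnd
          have hni := (List.nodup_cons.mp hnd).1
          exact hni hz2
      have hW2eq : W2 = pb hT (Sf m) (R.f n') := path_eq hT _ hW2path
      have hmem0 : R.f 0 ∈ W2.support := by
        rw [hW2, Walk.mem_support_append_iff]
        left
        rw [Walk.support_reverse, List.mem_reverse, Walk.support_copy]
        apply Walk.mem_support_iff_exists_getVert.mpr
        refine ⟨0, ?_, by omega⟩
        rw [wtake_getVert]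
        simp [Walk.getVert_zero]
      rw [hW2eq] at hmem0
      exact hw0 (pb_subset hT w0 hmem0)
    exact hnoteq (hpar S hfixS)
  · -- some order has no preimage
    push_neg at hsur
    obtain ⟨n0, hn0⟩ := hsur
    refine ⟨n0 + tu + 1, fun n hn w => ?_⟩
    by_contra hbad
    have hnk : n ≤ n * k := Nat.le_mul_of_pos_right n (by omega)
    obtain ⟨x', hgx', _⟩ := badness hT hg hshift htu_dd (by omega) w hbad
    apply hn0 (g^[n - n0] x')
    rw [← Function.iterate_add_apply, show n0 + (n - n0) = n by omega]
    exact hgx'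


end Stmt18Aux

theorem stmt18 (G : SimpleGraph V) (hT : G.IsTree) (g : V → V) (hg : IsEmb G g)
    (hne : ¬ Elliptic G g) (Rp : GRay G) (hRp : DirectionRay G g Rp) :
    -- hyperbolic case: a second fixed end `g⁻`, neighbourhoods given by vertices `xu`, `xv`
    (∀ Rm : GRay G, FixesEnd G g Rm → ¬ RayEquiv G Rm Rp → ∀ xu xv : V,
      ∃ N : ℕ, ∀ n, N ≤ n → ∀ w : V, ¬ InComp G xv Rm w → InComp G xu Rp (g^[n] w)) ∧
    -- parabolic case (`V = ∅`): every vertex is eventually mapped into `U`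
    ((∀ S : GRay G, FixesEnd G g S → RayEquiv G S Rp) → ∀ xu : V,
      ∃ N : ℕ, ∀ n, N ≤ n → ∀ w : V, InComp G xu Rp (g^[n] w)) := by
  constructor
  · intro Rm hfix hnequiv xu xv
    exact Stmt18Aux.hyperbolic_case hT hg hne hRp Rm hfix hnequiv xu xv
  · intro hpar xu
    exact Stmt18Aux.parabolic_case hT hg hne hRp hpar xu
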